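/- If an operator O acts on f ∈ L¹(0,b) both as a fractional integral with analytic kernel, O f(x) = ∫_0^x (x−t)^{α−1} A((x−t)^β) f(t) dt, and as a weighted Riemann–Liouville integral, O f(x) = (1/(Γ(α)w(x))) ∫_0^x (x−t)^{α−1} w(t) f(t) dt, where A is analytic and w is real, continuous and nonvanishing, then w(x) = w(0)·e^{κx} for some κ ∈ ℝ, i.e., O is a tempered fractional integral. -/

import Mathlib

open MeasureTheory intervalIntegral

lemma kernel_eq
    (b α β : ℝ) (hb : 0 < b) (hα : 0 < α) (hβ : 0 < β)
    (A : ℝ → ℝ) (hA : AnalyticOn ℝ A Set.univ)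
    (w : ℝ → ℝ) (hwc : ContinuousOn w (Set.Ico 0 b))
    (hw : ∀ x ∈ Set.Ico 0 b, w x ≠ 0)
    (heq : ∀ f : ℝ → ℝ, IntegrableOn f (Set.Ioo 0 b) →
      ∀ x ∈ Set.Ioo 0 b,
        (∫ t in (0:ℝ)..x, (x - t) ^ (α - 1) * A ((x - t) ^ β) * f t)
          = (1 / (Real.Gamma α * w x)) * ∫ t in (0:ℝ)..x, (x - t) ^ (α - 1) * w t * f t) :
    ∀ x ∈ Set.Ioo 0 b, ∀ t ∈ Set.Ioo 0 x,
      Real.Gamma α * A ((x - t) ^ β) * w x = w t := by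
  intro x hx t ht
  have hΓ : 0 < Real.Gamma α := Real.Gamma_pos_of_pos hα
  have hwx : w x ≠ 0 := hw x ⟨le_of_lt hx.1, hx.2⟩
  set c : ℝ := 1 / (Real.Gamma α * w x) with hc
  set K1 : ℝ → ℝ := fun τ => (x - τ) ^ (α - 1) * A ((x - τ) ^ β) with hK1
  set K2 : ℝ → ℝ := fun τ => (x - τ) ^ (α - 1) * w τ with hK2
  set H : ℝ → ℝ := fun τ => K1 τ - c * K2 τ with hH
  have hcontK1 : ∀ τ ∈ Set.Ioo 0 x, ContinuousAt K1 τ := by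
    intro τ hτ
    have h1 : ContinuousAt (fun u : ℝ => x - u) τ :=
      (continuous_const.sub continuous_id).continuousAt
    have hxτ : (0:ℝ) < x - τ := by linarith [hτ.2]
    have h2 : ContinuousAt (fun u : ℝ => (x - u) ^ (α - 1)) τ :=
      ContinuousAt.comp (Real.continuousAt_rpow_const _ _ (Or.inl hxτ.ne')) h1
    have h3 : ContinuousAt (fun u : ℝ => (x - u) ^ β) τ :=
      ContinuousAt.comp (Real.continuousAt_rpow_const _ _ (Or.inl hxτ.ne')) h1
    have h4 : ContinuousAt A ((x - τ) ^ β) :=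
      ((hA _ (Set.mem_univ _)).continuousWithinAt).continuousAt (by simp)
    exact h2.mul (ContinuousAt.comp (f := fun u : ℝ => (x - u) ^ β) h4 h3)
  have hcontK2 : ∀ τ ∈ Set.Ioo 0 x, ContinuousAt K2 τ := by
    intro τ hτ
    have h1 : ContinuousAt (fun u : ℝ => x - u) τ :=
      (continuous_const.sub continuous_id).continuousAt
    have hxτ : (0:ℝ) < x - τ := by linarith [hτ.2]
    have h2 : ContinuousAt (fun u : ℝ => (x - u) ^ (α - 1)) τ :=
      ContinuousAt.comp (Real.continuousAt_rpow_const _ _ (Or.inl hxτ.ne')) h1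
    have hwτ : ContinuousAt w τ := by
      refine (hwc.mono ?_).continuousAt
        (isOpen_Ioo.mem_nhds (show τ ∈ Set.Ioo 0 b from ⟨hτ.1, lt_trans hτ.2 hx.2⟩))
      exact fun z hz => ⟨le_of_lt hz.1, hz.2⟩
    exact h2.mul hwτ
  have hcontH : ∀ τ ∈ Set.Ioo 0 x, ContinuousAt H τ := fun τ hτ =>
    (hcontK1 τ hτ).sub (continuousAt_const.mul (hcontK2 τ hτ))
  -- integrability on closed subintervals
  have hIntOn : ∀ (K : ℝ → ℝ), (∀ τ ∈ Set.Ioo 0 x, ContinuousAt K τ) →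
      ∀ s u : ℝ, 0 < s → u < x → IntegrableOn K (Set.Ioo s u) := by
    intro K hK s u hs hux
    rcases le_or_gt u s with h | h
    · rw [Set.Ioo_eq_empty (by exact fun hh => absurd h (not_le.mpr hh))]
      exact integrableOn_empty
    · have hcon : ContinuousOn K (Set.Icc s u) := by
        intro τ hτ
        exact (hK τ ⟨lt_of_lt_of_le hs hτ.1, lt_of_le_of_lt hτ.2 hux⟩).continuousWithinAt
      exact (hcon.integrableOn_Icc).mono_set Set.Ioo_subset_Icc_self
  -- integrals over subintervals vanish
  have hzero : ∀ s u : ℝ, 0 < s → s < u → u < x → ∫ τ in Set.Ioo s u, H τ = 0 := by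
    intro s u hs hsu hux
    have hIoosub : Set.Ioo s u ⊆ Set.Ioc 0 x := fun z hz =>
      ⟨lt_trans hs hz.1, le_of_lt (lt_trans hz.2 hux)⟩
    set f : ℝ → ℝ := (Set.Ioo s u).indicator (fun _ => (1:ℝ)) with hf
    have hfint : IntegrableOn f (Set.Ioo 0 b) := by
      rw [IntegrableOn, hf, integrable_indicator_iff measurableSet_Ioo]
      refine (integrableOn_const_iff (by simp)).mpr (Or.inr ?_)
      exact lt_of_le_of_lt (Measure.restrict_apply_le _ _) (by simp [Real.volume_Ioo])
    have hmain := heq f hfint x hx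
    have hconv : ∀ (K : ℝ → ℝ), (∫ τ in (0:ℝ)..x, K τ * f τ) = ∫ τ in Set.Ioo s u, K τ := by
      intro K
      rw [intervalIntegral.integral_of_le (le_of_lt hx.1)]
      have hptw : ∀ τ, K τ * f τ = (Set.Ioo s u).indicator K τ := by
        intro τ
        by_cases hτ : τ ∈ Set.Ioo s u <;> simp [hf, Set.indicator_apply, hτ]
      simp_rw [hptw]
      rw [MeasureTheory.setIntegral_indicator measurableSet_Ioo,
        Set.inter_eq_self_of_subset_right hIoosub]
    have h1 : (∫ τ in Set.Ioo s u, K1 τ) = c * ∫ τ in Set.Ioo s u, K2 τ := by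
      rw [← hconv K1, ← hconv K2]
      exact hmain
    have hi1 : IntegrableOn K1 (Set.Ioo s u) := hIntOn K1 hcontK1 s u hs hux
    have hi2 : IntegrableOn K2 (Set.Ioo s u) := hIntOn K2 hcontK2 s u hs hux
    have hsplit : (∫ τ in Set.Ioo s u, H τ)
        = (∫ τ in Set.Ioo s u, K1 τ) - c * ∫ τ in Set.Ioo s u, K2 τ := by
      rw [hH]
      rw [integral_sub hi1 (hi2.const_mul c), MeasureTheory.integral_const_mul]
    rw [hsplit, h1, sub_self]
  -- FTC argument
  set s0 : ℝ := t / 2 with hs0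
  have hs0pos : 0 < s0 := by simp only [hs0]; linarith [ht.1]
  have hs0t : s0 < t := by simp only [hs0]; linarith [ht.1]
  have htmem : t ∈ Set.Ioo s0 x := ⟨hs0t, ht.2⟩
  have hΦzero : ∀ u ∈ Set.Ioo s0 x, (∫ τ in s0..u, H τ) = 0 := by
    intro u hu
    rw [intervalIntegral.integral_of_le (le_of_lt hu.1),
      MeasureTheory.integral_Ioc_eq_integral_Ioo]
    exact hzero s0 u hs0pos hu.1 hu.2
  have hInt : IntervalIntegrable H volume s0 t := by
    apply ContinuousOn.intervalIntegrable
    intro τ hτ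
    rw [Set.uIcc_of_le (le_of_lt hs0t)] at hτ
    exact (hcontH τ ⟨lt_of_lt_of_le hs0pos hτ.1, lt_of_le_of_lt hτ.2 ht.2⟩).continuousWithinAt
  have hmeas : StronglyMeasurableAtFilter H (nhds t) := by
    have hcHon : ContinuousOn H (Set.Ioo 0 x) := fun τ hτ => (hcontH τ hτ).continuousWithinAt
    exact ⟨Set.Ioo 0 x, isOpen_Ioo.mem_nhds ht, hcHon.aestronglyMeasurable measurableSet_Ioo⟩
  have hD := intervalIntegral.integral_hasDerivAt_right hInt hmeas (hcontH t ht)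
  have hEq : (fun u => ∫ τ in s0..u, H τ) =ᶠ[nhds t] fun _ => (0:ℝ) :=
    Filter.eventuallyEq_of_mem (isOpen_Ioo.mem_nhds htmem) (fun u hu => hΦzero u hu)
  have hD0 : HasDerivAt (fun u => ∫ τ in s0..u, H τ) 0 t :=
    (hasDerivAt_const t (0:ℝ)).congr_of_eventuallyEq hEq
  have hHt : H t = 0 := hD.unique hD0
  -- unfold
  have hp : 0 < (x - t) ^ (α - 1) := Real.rpow_pos_of_pos (by linarith [ht.2]) _
  have hAt : A ((x - t) ^ β) = c * w t := by
    have h0 : (x - t) ^ (α - 1) * A ((x - t) ^ β)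
        = (x - t) ^ (α - 1) * (c * w t) := by
      have := hHt
      simp only [hH, hK1, hK2] at this
      nlinarith [this]
    exact mul_left_cancel₀ hp.ne' h0
  rw [hAt, hc]
  field_simp

/-- If an operator is simultaneously a fractional integral with analytic kernel and a
weighted Riemann--Liouville fractional integral, then the weight is exponential, i.e.
the operator is a tempered fractional integral. -/
theorem analytic_kernel_and_weighted_implies_tempered
    (b α β : ℝ) (hb : 0 < b) (hα : 0 < α) (hβ : 0 < β)
    (A : ℝ → ℝ) (hA : AnalyticOn ℝ A Set.univ)
    (w : ℝ → ℝ) (hwc : ContinuousOn w (Set.Ico 0 b))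
    (hw : ∀ x ∈ Set.Ico 0 b, w x ≠ 0)
    (heq : ∀ f : ℝ → ℝ, IntegrableOn f (Set.Ioo 0 b) →
      ∀ x ∈ Set.Ioo 0 b,
        (∫ t in (0:ℝ)..x, (x - t) ^ (α - 1) * A ((x - t) ^ β) * f t)
          = (1 / (Real.Gamma α * w x)) * ∫ t in (0:ℝ)..x, (x - t) ^ (α - 1) * w t * f t) :
    ∃ κ : ℝ, ∀ x ∈ Set.Ico 0 b, w x = w 0 * Real.exp (κ * x) := by
  have key := kernel_eq b α β hb hα hβ A hA w hwc hw heq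
  obtain ⟨g, hg⟩ : ∃ g : ℝ → ℝ, g = fun s => Real.Gamma α * A (s ^ β) := ⟨_, rfl⟩
  have hkey : ∀ t x : ℝ, 0 < t → t < x → x < b → g (x - t) * w x = w t := by
    intro t x ht htx hxb
    have := key x ⟨lt_trans ht htx, hxb⟩ t ⟨ht, htx⟩
    simpa [hg, mul_assoc, mul_comm, mul_left_comm] using this
  have hgdiff : ∀ s : ℝ, 0 < s → DifferentiableAt ℝ g s := by
    intro s hs
    have h1 : DifferentiableAt ℝ (fun u : ℝ => u ^ β) s :=
      (Real.hasDerivAt_rpow_const (Or.inl hs.ne')).differentiableAt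
    have h2 : DifferentiableAt ℝ A (s ^ β) :=
      (hA _ (Set.mem_univ _)).differentiableWithinAt.differentiableAt (by simp)
    rw [hg]
    exact (h2.comp s h1).const_mul _
  have hwderiv : ∀ t x : ℝ, 0 < t → t < x → x < b →
      HasDerivAt w (-(deriv g (x - t)) * w x) t := by
    intro t x ht htx hxb
    have hin : HasDerivAt (fun u : ℝ => x - u) (-1) t := by
      simpa using (hasDerivAt_id t).const_sub x
    have hgd : HasDerivAt g (deriv g (x - t)) (x - t) :=
      (hgdiff (x - t) (by linarith)).hasDerivAt
    have hcomp : HasDerivAt (fun u : ℝ => g (x - u)) (deriv g (x - t) * (-1)) t :=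
      HasDerivAt.comp t hgd hin
    have hmul : HasDerivAt (fun u : ℝ => g (x - u) * w x) (deriv g (x - t) * (-1) * w x) t :=
      hcomp.mul_const _
    have hev : (fun u : ℝ => g (x - u) * w x) =ᶠ[nhds t] w := by
      refine Filter.eventuallyEq_of_mem (isOpen_Ioo.mem_nhds (⟨ht, htx⟩ : t ∈ Set.Ioo 0 x)) ?_
      intro u hu
      exact hkey u x hu.1 hu.2 hxb
    have hfin := hmul.congr_of_eventuallyEq hev.symm
    refine hfin.congr_deriv ?_
    ring
  have hconst : ∀ t1 t2 : ℝ, t1 ∈ Set.Ioo 0 b → t2 ∈ Set.Ioo 0 b →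
      deriv w t1 * w t2 = deriv w t2 * w t1 := by
    intro t1 t2 h1 h2
    set s : ℝ := min (b - t1) (b - t2) / 2 with hs
    have hb1 : 0 < b - t1 := by linarith [h1.2]
    have hb2 : 0 < b - t2 := by linarith [h2.2]
    have hspos : 0 < s := by
      apply div_pos (lt_min hb1 hb2); norm_num
    have hm1 : s < b - t1 := by
      have := min_le_left (b - t1) (b - t2); simp only [hs]; linarith
    have hm2 : s < b - t2 := by
      have := min_le_right (b - t1) (b - t2); simp only [hs]; linarith
    have hd1 : HasDerivAt w (-(deriv g s) * w (t1 + s)) t1 := by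
      have := hwderiv t1 (t1 + s) h1.1 (by linarith) (by linarith)
      simpa using this
    have hd2 : HasDerivAt w (-(deriv g s) * w (t2 + s)) t2 := by
      have := hwderiv t2 (t2 + s) h2.1 (by linarith) (by linarith)
      simpa using this
    have hk1 : g s * w (t1 + s) = w t1 := by
      have := hkey t1 (t1 + s) h1.1 (by linarith) (by linarith)
      simpa using this
    have hk2 : g s * w (t2 + s) = w t2 := by
      have := hkey t2 (t2 + s) h2.1 (by linarith) (by linarith)
      simpa using this
    rw [hd1.deriv, hd2.deriv, ← hk1, ← hk2]
    ring
  -- the logarithmic derivative is a constant κ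
  have ht0 : (b / 2) ∈ Set.Ioo 0 b := ⟨by linarith, by linarith⟩
  set κ : ℝ := deriv w (b / 2) / w (b / 2) with hκ
  have hwt0 : w (b / 2) ≠ 0 := hw _ ⟨le_of_lt ht0.1, ht0.2⟩
  have hderiv_eq : ∀ t ∈ Set.Ioo 0 b, HasDerivAt w (κ * w t) t := by
    intro t ht
    have hd : HasDerivAt w (-(deriv g ((t + b) / 2 - t)) * w ((t + b) / 2)) t :=
      hwderiv t ((t + b) / 2) ht.1 (by linarith [ht.2]) (by linarith [ht.2])
    have hval : κ * w t = deriv w t := by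
      have hc := hconst t (b / 2) ht ht0
      rw [hκ]
      field_simp
      linarith [hc]
    rw [hval]
    exact hd.deriv ▸ hd
  -- the function w t * exp (-κ t) has zero derivative on (0, b)
  have hφd : ∀ u ∈ Set.Ioo 0 b, HasDerivAt (fun u => w u * Real.exp (-κ * u)) 0 u := by
    intro u hu
    have hexp : HasDerivAt (fun u : ℝ => Real.exp (-κ * u)) (Real.exp (-κ * u) * (-κ * 1)) u :=
      ((hasDerivAt_id u).const_mul (-κ)).exp
    have := (hderiv_eq u hu).mul hexp
    refine this.congr_deriv ?_
    ring
  have hdiffOn : DifferentiableOn ℝ (fun u => w u * Real.exp (-κ * u)) (Set.Ioo 0 b) :=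
    fun z hz => ((hφd z hz).differentiableAt).differentiableWithinAt
  have hfd0 : ∀ z ∈ Set.Ioo 0 b,
      fderivWithin ℝ (fun u => w u * Real.exp (-κ * u)) (Set.Ioo 0 b) z = 0 := by
    intro z hz
    rw [fderivWithin_of_isOpen isOpen_Ioo hz, (hφd z hz).hasFDerivAt.fderiv]
    ext v
    simp

  have hφconst : ∀ t ∈ Set.Ioo 0 b,
      w t * Real.exp (-κ * t) = w (b / 2) * Real.exp (-κ * (b / 2)) := by
    intro t ht
    exact (convex_Ioo 0 b).is_const_of_fderivWithin_eq_zero hdiffOn hfd0 ht ht0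
  set C : ℝ := w (b / 2) * Real.exp (-κ * (b / 2)) with hC
  have hform : ∀ t ∈ Set.Ioo 0 b, w t = C * Real.exp (κ * t) := by
    intro t ht
    calc w t = w t * Real.exp (-κ * t) * Real.exp (κ * t) := by
          rw [mul_assoc, ← Real.exp_add]; simp
      _ = C * Real.exp (κ * t) := by rw [hφconst t ht]
  -- identify the constant via continuity at 0
  have hCw0 : w 0 = C := by
    have hne : (nhdsWithin 0 (Set.Ioo 0 b)).NeBot := by
      rw [← mem_closure_iff_nhdsWithin_neBot, closure_Ioo hb.ne]
      exact ⟨le_refl 0, hb.le⟩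
    have h1 : Filter.Tendsto w (nhdsWithin 0 (Set.Ioo 0 b)) (nhds (w 0)) :=
      (hwc 0 ⟨le_refl 0, hb⟩).mono (fun z hz => ⟨le_of_lt hz.1, hz.2⟩)
    have h2 : Filter.Tendsto (fun t => C * Real.exp (κ * t))
        (nhdsWithin 0 (Set.Ioo 0 b)) (nhds C) := by
      have hcont : Continuous fun t : ℝ => C * Real.exp (κ * t) :=
        continuous_const.mul (Real.continuous_exp.comp (continuous_const.mul continuous_id))
      have h := hcont.continuousWithinAt (s := Set.Ioo 0 b) (x := (0:ℝ))
      unfold ContinuousWithinAt at h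
      simpa using h
    have h3 : Filter.Tendsto w (nhdsWithin 0 (Set.Ioo 0 b)) (nhds C) := by
      refine h2.congr' ?_
      filter_upwards [eventually_mem_nhdsWithin] with t ht
      exact (hform t ht).symm
    exact tendsto_nhds_unique h1 h3
  refine ⟨κ, ?_⟩
  intro x hx
  rcases eq_or_lt_of_le hx.1 with h0 | h0
  · rw [← h0]; simp
  · rw [hform x ⟨h0, hx.2⟩, hCw0]
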